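/- A commutative ring R with identity is local (i.e., has a unique maximal ideal) if and only if its Anderson ring R[X]_A is local. -/

import Mathlib

open Polynomial

/-- The multiplicative set `A = {f ∈ R[X] : f(0) = 1}` of polynomials
with constant term `1`. -/
def andersonSubmonoid (R : Type*) [CommRing R] : Submonoid (Polynomial R) where
  carrier := {f | f.coeff 0 = 1}
  one_mem' := by simp
  mul_mem' := by
    intro a b ha hb
    simp only [Set.mem_setOf_eq, Polynomial.mul_coeff_zero] at *
    rw [ha, hb, mul_one]

/-- The Anderson ring `R[X]_A`, the localization of `R[X]` at `A`. -/
abbrev AndersonRing (R : Type*) [CommRing R] := Localization (andersonSubmonoid R)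

/-- The canonical ring homomorphism `R → R[X]_A`. -/
noncomputable def andersonMap (R : Type*) [CommRing R] : R →+* AndersonRing R :=
  (algebraMap (Polynomial R) (AndersonRing R)).comp Polynomial.C

/-- Evaluation at `0` lifts to the Anderson ring. -/
noncomputable def andersonEval (R : Type*) [CommRing R] : AndersonRing R →+* R :=
  IsLocalization.lift (M := andersonSubmonoid R) (g := Polynomial.evalRingHom (0 : R))
    (by
      rintro ⟨s, hs⟩
      have : Polynomial.eval (0 : R) s = 1 := by
        rw [← Polynomial.coeff_zero_eq_eval_zero]; exact hs
      simpa [this] using isUnit_one)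

lemma andersonEval_algebraMap (R : Type*) [CommRing R] (f : Polynomial R) :
    andersonEval R (algebraMap (Polynomial R) (AndersonRing R) f) = f.eval 0 :=
  IsLocalization.lift_eq _ _

/-- A polynomial whose constant term is a unit becomes a unit in the Anderson ring. -/
lemma isUnit_algebraMap_of_isUnit_coeff_zero (R : Type*) [CommRing R] (f : Polynomial R)
    (h : IsUnit (f.coeff 0)) :
    IsUnit (algebraMap (Polynomial R) (AndersonRing R) f) := by
  obtain ⟨u, hu⟩ := h
  have hmem : (Polynomial.C ((u⁻¹ : Rˣ) : R) * f) ∈ andersonSubmonoid R := by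
    show (Polynomial.C ((u⁻¹ : Rˣ) : R) * f).coeff 0 = 1
    simp [Polynomial.mul_coeff_zero, ← hu]
  have h1 : IsUnit (algebraMap (Polynomial R) (AndersonRing R)
      (Polynomial.C ((u⁻¹ : Rˣ) : R) * f)) :=
    IsLocalization.map_units (M := andersonSubmonoid R) _ ⟨_, hmem⟩
  have h2 : IsUnit (algebraMap (Polynomial R) (AndersonRing R)
      (Polynomial.C ((u : Rˣ) : R))) :=
    (u.map (((algebraMap (Polynomial R) (AndersonRing R)).comp Polynomial.C) : R →* AndersonRing R)).isUnit
  have := h2.mul h1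
  rw [← map_mul, ← mul_assoc, ← Polynomial.C_mul] at this
  simpa using this

/-- `R` is a local ring iff its Anderson ring `R[X]_A` is a local ring. -/
theorem anderson_isLocalRing_iff (R : Type*) [CommRing R] :
    IsLocalRing R ↔ IsLocalRing (AndersonRing R) := by
  constructor
  · intro hR
    have hnt : Nontrivial (AndersonRing R) := by
      refine ⟨0, 1, fun h => ?_⟩
      have := congrArg (andersonEval R) h
      simp only [map_zero, map_one] at this
      exact zero_ne_one this
    refine IsLocalRing.of_isUnit_or_isUnit_one_sub_self ?_
    intro x
    obtain ⟨⟨f, s⟩, rfl⟩ := IsLocalization.mk'_surjective (andersonSubmonoid R) x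
    have hs : IsUnit (algebraMap (Polynomial R) (AndersonRing R) (s : Polynomial R)) :=
      IsLocalization.map_units _ s
    have hspec : IsLocalization.mk' (AndersonRing R) f s *
        algebraMap (Polynomial R) (AndersonRing R) (s : Polynomial R) =
        algebraMap (Polynomial R) (AndersonRing R) f :=
      IsLocalization.mk'_spec _ _ _
    rcases IsLocalRing.isUnit_or_isUnit_one_sub_self (f.coeff 0) with h | h
    · left
      have hf := isUnit_algebraMap_of_isUnit_coeff_zero R f h
      rw [← hspec] at hf
      exact (isUnit_of_mul_isUnit_left hf)
    · right
      have hcoeff : ((s : Polynomial R) - f).coeff 0 = 1 - f.coeff 0 := by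
        have : (s : Polynomial R).coeff 0 = 1 := s.2
        simp [Polynomial.coeff_sub, this]
      have hf := isUnit_algebraMap_of_isUnit_coeff_zero R ((s : Polynomial R) - f)
        (by rw [hcoeff]; exact h)
      have key : (1 - IsLocalization.mk' (AndersonRing R) f s) *
          algebraMap (Polynomial R) (AndersonRing R) (s : Polynomial R) =
          algebraMap (Polynomial R) (AndersonRing R) ((s : Polynomial R) - f) := by
        rw [map_sub, sub_mul, one_mul, hspec]
      rw [← key] at hf
      exact isUnit_of_mul_isUnit_left hf
  · intro hL
    have hnt : Nontrivial R := by
      refine ⟨0, 1, fun h => ?_⟩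
      have h2 : (0 : AndersonRing R) = 1 := by
        rw [← map_zero (andersonMap R), ← map_one (andersonMap R), h]
      exact zero_ne_one h2
    have hsurj : Function.Surjective (andersonEval R) := fun r =>
      ⟨algebraMap (Polynomial R) (AndersonRing R) (Polynomial.C r), by
        rw [andersonEval_algebraMap]; simp⟩
    exact IsLocalRing.of_surjective' (andersonEval R) hsurj
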